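/- arXiv:1807.02779 — 3 statements merged into one kernel-verified Lean document; each statement's English description precedes it below -/
import Mathlib

section
/- For any vector x ∈ ℝ^n, the cyclic sign variation count s_c^-(x) equals s^-(x) if s^-(x) is even, and equals s^-(x) + 1 if s^-(x) is odd. -/
/-- Number of sign changes in a list of reals: the number of adjacent pairs
with strictly negative product. -/
noncomputable def signChanges : List ℝ → ℕ
  | a :: b :: l => (if a * b < 0 then 1 else 0) + signChanges (b :: l)
  | _ => 0

/-- `s⁻` of a list: sign changes after deleting all zero entries. -/
noncomputable def sMinusList (l : List ℝ) : ℕ :=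
  signChanges (l.filter (fun a => decide (a ≠ 0)))

/-- `s⁻(x)`: the number of sign changes in `x` after deleting all zero entries. -/
noncomputable def sMinus {n : ℕ} (x : Fin n → ℝ) : ℕ :=
  sMinusList (List.ofFn x)

/-- Replace each zero entry of `x` by `1` or `-1` according to `ε`. -/
noncomputable def replZeros {n : ℕ} (x : Fin n → ℝ) (ε : Fin n → Bool) : Fin n → ℝ :=
  fun i => if x i = 0 then (if ε i then 1 else -1) else x i

/-- `s⁺(x)`: the maximal number of sign changes over all replacements of the
zero entries of `x` by `±1`. -/
noncomputable def sPlus {n : ℕ} (x : Fin n → ℝ) : ℕ :=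
  Finset.univ.sup fun ε : Fin n → Bool => signChanges (List.ofFn (replZeros x ε))

/-- The cyclically rotated vector `[x i, …, x (n-1), x 0, …, x i]` (of length `n+1`),
as a list. -/
noncomputable def rotList {n : ℕ} (x : Fin n → ℝ) (i : Fin n) : List ℝ :=
  (List.ofFn x).rotate i.val ++ [x i]

/-- The cyclic sign variation count `s_c⁻(x)`: the maximum of `s⁻` over all
cyclic rotations `[x i, …, x (n-1), x 0, …, x i]`. -/
noncomputable def sMinusC {n : ℕ} (x : Fin n → ℝ) : ℕ :=
  Finset.univ.sup fun i : Fin n => sMinusList (rotList x i)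

/-- The cyclic sign variation count `s_c⁺(x)`: the maximum of `s⁺` over all
cyclic rotations, where the two copies of the entry `x i` at the two ends of a
rotation are replaced by the same sign. -/
noncomputable def sPlusC {n : ℕ} (x : Fin n → ℝ) : ℕ :=
  Finset.univ.sup fun p : (Fin n → Bool) × Fin n =>
    signChanges (rotList (replZeros x p.1) p.2)

/-- `A` is strictly sign-regular of order `k` (`SSR_k`): all `k×k` minors are
nonzero and have the same sign. -/
def SSRof {n m : ℕ} (A : Matrix (Fin n) (Fin m) ℝ) (k : ℕ) : Prop :=
  (∀ (α : Fin k → Fin n) (β : Fin k → Fin m), StrictMono α → StrictMono β →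
      0 < (A.submatrix α β).det) ∨
  (∀ (α : Fin k → Fin n) (β : Fin k → Fin m), StrictMono α → StrictMono β →
      (A.submatrix α β).det < 0)

/-- `A` is sign-regular of order `k` (`SR_k`): all `k×k` minors have the same
non-strict sign. -/
def SRof {n m : ℕ} (A : Matrix (Fin n) (Fin m) ℝ) (k : ℕ) : Prop :=
  (∀ (α : Fin k → Fin n) (β : Fin k → Fin m), StrictMono α → StrictMono β →
      0 ≤ (A.submatrix α β).det) ∨
  (∀ (α : Fin k → Fin n) (β : Fin k → Fin m), StrictMono α → StrictMono β →
      (A.submatrix α β).det ≤ 0)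

/-- A square matrix is Metzler if all its off-diagonal entries are nonnegative. -/
def IsMetzler {n : ℕ} (A : Matrix (Fin n) (Fin n) ℝ) : Prop :=
  ∀ i j : Fin n, i ≠ j → 0 ≤ A i j

/-- A square matrix is irreducible if the directed graph with an edge from `i`
to `j` whenever `i ≠ j` and `A i j ≠ 0` is strongly connected. -/
def IsIrreducibleMatrix {n : ℕ} (A : Matrix (Fin n) (Fin n) ℝ) : Prop :=
  ∀ i j : Fin n, i ≠ j → Relation.TransGen (fun p q : Fin n => p ≠ q ∧ A p q ≠ 0) i j

/-- Membership in `Q`: Metzler, and the nonzero entries lie only on the main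
diagonal, the super- and sub-diagonals, and the corner positions `(1,n)`, `(n,1)`
(in 0-indexed form: `(0, n-1)` and `(n-1, 0)`). -/
def memQ {n : ℕ} (A : Matrix (Fin n) (Fin n) ℝ) : Prop :=
  IsMetzler A ∧ ∀ i j : Fin n, A i j ≠ 0 →
    ((i : ℕ) = (j : ℕ) ∨ (j : ℕ) = (i : ℕ) + 1 ∨ (i : ℕ) = (j : ℕ) + 1 ∨
      ((i : ℕ) = 0 ∧ (j : ℕ) = n - 1) ∨ ((i : ℕ) = n - 1 ∧ (j : ℕ) = 0))

/-- Membership in `Q⁺`: in `Q` and irreducible. -/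
def memQplus {n : ℕ} (A : Matrix (Fin n) (Fin n) ℝ) : Prop :=
  memQ A ∧ IsIrreducibleMatrix A

/-- `P` is the permutation matrix of a cyclic shift `j ↦ j + k (mod n)`. -/
def IsCyclicPermMatrix {n : ℕ} (P : Matrix (Fin n) (Fin n) ℝ) : Prop :=
  ∃ k : ℕ, ∀ i j : Fin n, P i j = if (j : ℕ) % n = ((i : ℕ) + k) % n then 1 else 0

private lemma sgn_trans {u v w : ℝ} (hu : u ≠ 0) (huv : 0 < u * v) :
    (0 < u * w ↔ 0 < v * w) := by
  constructor <;> intro h1 <;> nlinarith [mul_pos huv h1, mul_self_pos.2 hu]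

private lemma sgn_trans' {u v w : ℝ} (hu : u ≠ 0) (hv : v ≠ 0) (hw : w ≠ 0)
    (huv : u * v < 0) : (0 < u * w ↔ ¬ 0 < v * w) := by
  constructor
  · intro h1 h2; nlinarith [mul_pos h1 h2, mul_self_pos.2 hw]
  · intro h2
    have h3 : v * w < 0 := (mul_ne_zero hv hw).lt_or_gt.resolve_right h2
    nlinarith [mul_pos (neg_pos.2 huv) (neg_pos.2 h3), mul_self_pos.2 hv]

private lemma sc_cons_cons (a b : ℝ) (l : List ℝ) :
    signChanges (a :: b :: l) = (if a * b < 0 then 1 else 0) + signChanges (b :: l) := rfl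

private lemma sc_append : ∀ (l1 : List ℝ) (a : ℝ) (l2 : List ℝ),
    signChanges (l1 ++ a :: l2) = signChanges (l1 ++ [a]) + signChanges (a :: l2)
  | [], a, l2 => by simp [signChanges]
  | [b], a, l2 => by
      show signChanges (b :: a :: l2) = signChanges [b, a] + signChanges (a :: l2)
      rw [sc_cons_cons]
      simp [signChanges]
  | b :: c :: t, a, l2 => by
      have ih := sc_append (c :: t) a l2
      show signChanges (b :: c :: (t ++ a :: l2)) = signChanges (b :: c :: (t ++ [a])) + _
      rw [sc_cons_cons, sc_cons_cons]
      have h1 : c :: (t ++ a :: l2) = (c :: t) ++ a :: l2 := rfl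
      have h2 : c :: (t ++ [a]) = (c :: t) ++ [a] := rfl
      rw [h1, h2, ih]
      omega

private lemma sc_concat : ∀ (b : ℝ) (t : List ℝ) (c : ℝ),
    signChanges ((b :: t) ++ [c]) =
      signChanges (b :: t) + (if (b :: t).getLast (by simp) * c < 0 then 1 else 0)
  | b, [], c => by
      show signChanges [b, c] = _
      rw [sc_cons_cons]
      simp [signChanges, List.getLast]
      split_ifs with h <;> simp [h]
  | b, d :: t, c => by
      have ih := sc_concat d t c
      show signChanges (b :: ((d :: t) ++ [c])) = _
      have h1 : b :: ((d :: t) ++ [c]) = b :: d :: (t ++ [c]) := rfl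
      rw [h1, sc_cons_cons, sc_cons_cons]
      have h2 : d :: (t ++ [c]) = (d :: t) ++ [c] := rfl
      rw [h2, ih, List.getLast_cons (by simp : d :: t ≠ [])]
      omega

private lemma sc_le_concat : ∀ (l : List ℝ) (c : ℝ), signChanges l ≤ signChanges (l ++ [c])
  | [], c => by simp [signChanges]
  | b :: t, c => by rw [sc_concat]; omega

noncomputable def cyc (l : List ℝ) : ℕ := signChanges (l ++ l.take 1)

private lemma sc_le_cyc (l : List ℝ) : signChanges l ≤ cyc l := by
  cases l with
  | nil => simp [cyc]
  | cons a t => exact sc_le_concat _ _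

private lemma cyc_rotate_one (l : List ℝ) : cyc (l.rotate 1) = cyc l := by
  cases l with
  | nil => simp
  | cons a t =>
    cases t with
    | nil => simp [List.rotate]
    | cons b t' =>
      rw [List.rotate_cons_succ, List.rotate_zero]
      unfold cyc
      have h1 : ((b :: t') ++ [a]).take 1 = [b] := rfl
      have h2 : (a :: b :: t').take 1 = [a] := rfl
      rw [h1, h2]
      have h3 : ((b :: t') ++ [a]) ++ [b] = (b :: t') ++ (a :: [b]) := by
        rw [List.append_assoc]; rfl
      rw [h3, sc_append (b :: t') a [b]]
      have h4 : (a :: b :: t') ++ [a] = a :: ((b :: t') ++ [a]) := rfl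
      have h5 : (b :: t') ++ [a] = b :: (t' ++ [a]) := rfl
      rw [h4, h5, sc_cons_cons a b (t' ++ [a]), sc_cons_cons a b []]
      have h6 : signChanges [b] = 0 := rfl
      rw [h6]
      omega

private lemma cyc_rotate (l : List ℝ) (k : ℕ) : cyc (l.rotate k) = cyc l := by
  induction k with
  | zero => simp
  | succ k ih =>
    have h : l.rotate (k + 1) = (l.rotate k).rotate 1 := by rw [List.rotate_rotate]
    rw [h, cyc_rotate_one, ih]

private lemma parity : ∀ (a : ℝ) (t : List ℝ), (∀ y ∈ a :: t, y ≠ 0) →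
    (Even (signChanges (a :: t)) ↔ 0 < a * (a :: t).getLast (by simp))
  | a, [], h => by
    have ha : a ≠ 0 := h a (by simp)
    simp only [signChanges, List.getLast]
    simpa using mul_self_pos.2 ha
  | a, b :: t, h => by
    have ih := parity b t (fun y hy => h y (List.mem_cons_of_mem a hy))
    have ha : a ≠ 0 := h a (by simp)
    have hb : b ≠ 0 := h b (by simp)
    have hL : (b :: t).getLast (by simp) ≠ 0 :=
      h _ (List.mem_cons_of_mem a (List.getLast_mem (by simp)))
    rw [List.getLast_cons (by simp : b :: t ≠ []), sc_cons_cons]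
    by_cases hab : a * b < 0
    · rw [if_pos hab, Nat.add_comm, Nat.even_add_one, ih]
      exact (sgn_trans' ha hb hL hab).symm
    · have hab' : 0 < a * b := (mul_ne_zero ha hb).lt_or_gt.resolve_left (by simpa using hab)
      rw [if_neg hab, Nat.zero_add, ih]
      exact (sgn_trans ha hab').symm

private lemma cyc_eq_ite (l : List ℝ) (hne : l ≠ []) (h0 : ∀ y ∈ l, y ≠ 0) :
    cyc l = if Even (signChanges l) then signChanges l else signChanges l + 1 := by
  obtain ⟨a, t, rfl⟩ := List.exists_cons_of_ne_nil hne
  have hpar := parity a t h0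
  have ha : a ≠ 0 := h0 a (by simp)
  have hL : (a :: t).getLast (by simp) ≠ 0 := h0 _ (List.getLast_mem (by simp))
  show signChanges ((a :: t) ++ [a]) = _
  rw [sc_concat]
  set L := (a :: t).getLast (by simp) with hLdef
  by_cases he : Even (signChanges (a :: t))
  · have h1 : 0 < a * L := hpar.1 he
    have h2 : ¬ (L * a < 0) := by rw [mul_comm]; linarith
    simp [he, h2]
  · have h1 : ¬ (0 < a * L) := fun hc => he (hpar.2 hc)
    have h2 : a * L < 0 := (mul_ne_zero ha hL).lt_or_gt.resolve_right h1
    have h3 : L * a < 0 := by rw [mul_comm]; exact h2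
    simp [he, h3]

private lemma filter_rotate (p : ℝ → Bool) (l : List ℝ) (k : ℕ) (hk : k ≤ l.length) :
    (l.rotate k).filter p = (l.filter p).rotate ((l.take k).filter p).length := by
  rw [List.rotate_eq_drop_append_take hk, List.filter_append]
  have hsplit : l.filter p = (l.take k).filter p ++ (l.drop k).filter p := by
    rw [← List.filter_append, List.take_append_drop]
  conv_rhs => rw [hsplit]
  rw [List.rotate_eq_drop_append_take (by simp : ((l.take k).filter p).length ≤ _),
    List.take_left, List.drop_left]


/-- For any `x ∈ ℝⁿ`, `s_c⁻(x) = s⁻(x)` if `s⁻(x)` is even and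
`s_c⁻(x) = s⁻(x) + 1` if `s⁻(x)` is odd. -/
theorem cyclic_sMinus_eq (n : ℕ) (x : Fin n → ℝ) :
    sMinusC x = if Even (sMinus x) then sMinus x else sMinus x + 1 := by
  set p : ℝ → Bool := fun a => decide (a ≠ 0) with hp
  set l : List ℝ := List.ofFn x with hl
  set z : List ℝ := l.filter p with hz
  have hsm : sMinus x = signChanges z := rfl
  have hlen : l.length = n := by rw [hl, List.length_ofFn]
  have hrw : ∀ i : Fin n, sMinusList (rotList x i) =
      signChanges (z.rotate (((l.take i.val).filter p).length) ++ [x i].filter p) := by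
    intro i
    show signChanges (((l.rotate i.val) ++ [x i]).filter p) = _
    rw [List.filter_append, filter_rotate p l i.val (by omega)]
  have hdrop : ∀ i : Fin n, l.drop i.val = x i :: l.drop (i.val + 1) := by
    intro i
    rw [List.drop_eq_getElem_cons (by omega : (i : ℕ) < l.length)]
    have hgi : l[(i : ℕ)] = x i := by simp [hl]
    rw [hgi]
  have hle : ∀ i : Fin n, sMinusList (rotList x i) ≤ cyc z := by
    intro i
    rw [hrw i]
    calc signChanges (z.rotate (((l.take i.val).filter p).length) ++ [x i].filter p)
        ≤ cyc (z.rotate (((l.take i.val).filter p).length)) := by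
          by_cases hxi : x i = 0
          · have : [x i].filter p = [] := by simp [hp, hxi]
            rw [this, List.append_nil]
            exact sc_le_cyc _
          · have h1 : [x i].filter p = [x i] := by simp [hp, hxi]
            rw [h1]
            have h2 : z.rotate (((l.take i.val).filter p).length) =
                x i :: (l.drop (i.val + 1)).filter p ++ (l.take i.val).filter p := by
              rw [hz, ← filter_rotate p l i.val (by omega),
                List.rotate_eq_drop_append_take (by omega), List.filter_append, hdrop i]
              simp [hp, hxi]
            rw [h2]
            unfold cyc
            simp only [List.cons_append, List.take_succ_cons, List.take_zero]
            exact le_refl _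
      _ = cyc z := cyc_rotate z _
  by_cases hzn : z = []
  · have h0 : sMinusC x = 0 := by
      refine Nat.le_zero.mp ?_
      refine Finset.sup_le fun i _ => ?_
      have := hle i
      rwa [hzn] at this
    rw [h0, hsm, hzn]
    simp [signChanges]
  · obtain ⟨a, ha⟩ := List.exists_mem_of_ne_nil z hzn
    have haz : a ≠ 0 := by
      have := List.of_mem_filter (hz ▸ ha)
      simpa [hp] using this
    have hmem : a ∈ Set.range x := (List.mem_ofFn' x a).mp (hl ▸ List.mem_of_mem_filter (hz ▸ ha))
    obtain ⟨i0, hi0⟩ := hmem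
    have hx0 : x i0 ≠ 0 := by rw [hi0]; exact haz
    have heq : sMinusList (rotList x i0) = cyc z := by
      rw [hrw i0]
      have h1 : [x i0].filter p = [x i0] := by simp [hp, hx0]
      have h2 : z.rotate (((l.take i0.val).filter p).length) =
          x i0 :: ((l.drop (i0.val + 1)).filter p ++ (l.take i0.val).filter p) := by
        rw [hz, ← filter_rotate p l i0.val (by omega),
          List.rotate_eq_drop_append_take (by omega), List.filter_append, hdrop i0]
        simp [hp, hx0]
      rw [h1, h2, ← cyc_rotate z (((l.take i0.val).filter p).length), h2]
      unfold cyc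
      simp only [List.cons_append, List.take_succ_cons, List.take_zero]
    have hsup : sMinusC x = cyc z := by
      refine le_antisymm (Finset.sup_le fun i _ => hle i) ?_
      rw [← heq]
      exact Finset.le_sup (f := fun i : Fin n => sMinusList (rotList x i)) (Finset.mem_univ i0)
    rw [hsup, hsm]
    exact cyc_eq_ite z hzn fun y hy => by
      have := List.of_mem_filter (hz ▸ hy)
      simpa [hp] using this
end

section
/- For any vector x ∈ ℝ^n, the cyclic sign variation count s_c^+(x) equals s^+(x) if s^+(x) is even, and equals s^+(x) + 1 if s^+(x) is odd. -/
section CyclicAux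

private lemma signChanges_ofFn_aux {m : ℕ} (z : Fin (m+1) → ℝ) :
    signChanges (List.ofFn z) =
      ∑ j : Fin m, if z j.castSucc * z j.succ < 0 then 1 else 0 := by
  induction m with
  | zero => simp [List.ofFn_succ, signChanges]
  | succ m ih =>
    rw [List.ofFn_succ, List.ofFn_succ]
    rw [signChanges]
    rw [show (z (Fin.succ 0) :: List.ofFn fun i : Fin m => z i.succ.succ) =
      List.ofFn (fun i : Fin (m+1) => z i.succ) from by rw [List.ofFn_succ]]
    rw [ih (fun i => z i.succ), Fin.sum_univ_succ]
    simp [Fin.succ_castSucc, -Fin.castSucc_succ]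
    rfl

private lemma even_count_neg_aux {α : Type} [DecidableEq α] (s : Finset α) (f : α → ℝ) :
    (0 < ∏ i ∈ s, f i → Even (∑ i ∈ s, if f i < 0 then (1:ℕ) else 0)) ∧
    (∏ i ∈ s, f i < 0 → Odd (∑ i ∈ s, if f i < 0 then (1:ℕ) else 0)) := by
  induction s using Finset.induction with
  | empty => simp
  | @insert a s ha ih =>
    rw [Finset.prod_insert ha, Finset.sum_insert ha]
    constructor
    · intro h
      rcases mul_pos_iff.mp h with ⟨h1, h2⟩ | ⟨h1, h2⟩
      · rw [if_neg (by linarith)]; simpa using ih.1 h2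
      · rw [if_pos h1]
        obtain ⟨k, hk⟩ := ih.2 h2
        exact ⟨k+1, by omega⟩
    · intro h
      rcases mul_neg_iff.mp h with ⟨h1, h2⟩ | ⟨h1, h2⟩
      · rw [if_neg (by linarith)]
        obtain ⟨k, hk⟩ := ih.2 h2
        exact ⟨k, by omega⟩
      · rw [if_pos h1]
        obtain ⟨k, hk⟩ := ih.1 h2
        exact ⟨k, by omega⟩

open Fin.NatCast in
private lemma rotList_eq_ofFn_aux {n : ℕ} [NeZero n] (y : Fin n → ℝ) (i : Fin n) :
    rotList y i = List.ofFn (fun j : Fin (n+1) => y (i + ((j.val : ℕ) : Fin n))) := by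
  have hn : 0 < n := Nat.pos_of_ne_zero (NeZero.ne n)
  apply List.ext_getElem
  · simp [rotList]
  · intro j h1 h2
    simp only [List.getElem_ofFn]
    have hlen : ((List.ofFn y).rotate i.val).length = n := by simp
    have hj1 : j < n + 1 := by simpa [rotList] using h1
    simp only [rotList, List.getElem_append]
    split
    · next h =>
      rw [List.getElem_rotate]
      simp only [List.length_ofFn, List.getElem_ofFn]
      have hj : j < n := by simpa using h
      congr 1
      apply Fin.ext
      simp only [Fin.add_def, Fin.val_natCast]
      rw [Nat.mod_eq_of_lt hj, Nat.add_comm]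
    · next h =>
      have hj : j = n := by simp only [List.length_rotate, List.length_ofFn] at h; omega
      rw [List.getElem_singleton]
      rw [hj, Fin.natCast_self, add_zero]

open Fin.NatCast in
private lemma signChanges_rotList_aux {n : ℕ} [NeZero n] (y : Fin n → ℝ) (i : Fin n) :
    signChanges (rotList y i) = ∑ k : Fin n, if y k * y (k + 1) < 0 then 1 else 0 := by
  obtain ⟨m, rfl⟩ : ∃ m, n = m + 1 := ⟨n - 1, by have := NeZero.ne n; omega⟩
  rw [rotList_eq_ofFn_aux, signChanges_ofFn_aux]
  have h1 : ∀ j : Fin (m+1),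
      (if y (i + ((j.castSucc.val : ℕ) : Fin (m+1))) * y (i + ((j.succ.val : ℕ) : Fin (m+1))) < 0
        then (1:ℕ) else 0)
      = (fun k => if y k * y (k + 1) < 0 then (1:ℕ) else 0) (i + j) := by
    intro j
    have e1 : ((j.castSucc.val : ℕ) : Fin (m+1)) = j := by
      simp [Fin.cast_val_eq_self]
    have e2 : ((j.succ.val : ℕ) : Fin (m+1)) = j + 1 := by
      rw [Fin.val_succ]
      push_cast
      simp [Fin.cast_val_eq_self]
    rw [e1, e2, ← add_assoc]
  rw [Fintype.sum_congr _ _ h1]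
  exact Fintype.sum_bijective _ (Equiv.addLeft i).bijective _ _ (fun j => rfl)

private lemma cyclic_decomp_aux {m : ℕ} (y : Fin (m+1) → ℝ) :
    ∑ k : Fin (m+1), (if y k * y (k + 1) < 0 then (1:ℕ) else 0)
      = signChanges (List.ofFn y)
        + (if y (Fin.last m) * y (Fin.last m + 1) < 0 then 1 else 0) := by
  rw [signChanges_ofFn_aux, Fin.sum_univ_castSucc
    (f := fun k : Fin (m+1) => if y k * y (k + 1) < 0 then (1:ℕ) else 0)]
  simp [Fin.coeSucc_eq_succ]

private lemma cyclic_even_aux {m : ℕ} (y : Fin (m+1) → ℝ) (h0 : ∀ k, y k ≠ 0) :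
    Even (∑ k : Fin (m+1), if y k * y (k + 1) < 0 then (1:ℕ) else 0) := by
  apply (even_count_neg_aux Finset.univ (fun k => y k * y (k + 1))).1
  rw [Finset.prod_mul_distrib]
  rw [show ∏ k : Fin (m+1), y (k + 1) = ∏ k : Fin (m+1), y k from
    Fintype.prod_bijective _ (Equiv.addRight (1 : Fin (m+1))).bijective _ _ (fun k => rfl)]
  exact mul_self_pos.mpr (Finset.prod_ne_zero_iff.mpr (fun k _ => h0 k))

end CyclicAux

/-- For any `x ∈ ℝⁿ`, `s_c⁺(x) = s⁺(x)` if `s⁺(x)` is even and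
`s_c⁺(x) = s⁺(x) + 1` if `s⁺(x)` is odd. -/
theorem cyclic_sPlus_eq (n : ℕ) (x : Fin n → ℝ) :
    sPlusC x = if Even (sPlus x) then sPlus x else sPlus x + 1 := by
  cases n with
  | zero =>
    have h1 : sPlus x = 0 := by
      simp [sPlus, signChanges]
    have h2 : sPlusC x = 0 := by
      simp [sPlusC]
    simp [h1, h2]
  | succ m =>
    have hy0 : ∀ (ε : Fin (m+1) → Bool) k, replZeros x ε k ≠ 0 := by
      intro ε k
      simp only [replZeros]
      split
      · split <;> norm_num
      · assumption
    set C : (Fin (m+1) → Bool) → ℕ :=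
      fun ε => ∑ k : Fin (m+1), if replZeros x ε k * replZeros x ε (k + 1) < 0 then 1 else 0
      with hCdef
    set L : (Fin (m+1) → Bool) → ℕ := fun ε => signChanges (List.ofFn (replZeros x ε)) with hLdef
    have hrot : ∀ (ε : Fin (m+1) → Bool) (i : Fin (m+1)),
        signChanges (rotList (replZeros x ε) i) = C ε := fun ε i =>
      signChanges_rotList_aux (replZeros x ε) i
    have hCL1 : ∀ ε, L ε ≤ C ε := by
      intro ε
      rw [hCdef, hLdef]
      simp only
      rw [cyclic_decomp_aux]
      omega
    have hCL2 : ∀ ε, C ε ≤ L ε + 1 := by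
      intro ε
      rw [hCdef, hLdef]
      simp only
      rw [cyclic_decomp_aux]
      split <;> omega
    have hCeven : ∀ ε, Even (C ε) := fun ε => cyclic_even_aux (replZeros x ε) (hy0 ε)
    have hPC : sPlusC x = Finset.univ.sup C := by
      rw [sPlusC]
      apply le_antisymm
      · apply Finset.sup_le
        intro p _
        rw [hrot p.1 p.2]
        exact Finset.le_sup (Finset.mem_univ p.1)
      · apply Finset.sup_le
        intro ε _
        rw [← hrot ε 0]
        exact Finset.le_sup
          (f := fun p : (Fin (m+1) → Bool) × Fin (m+1) =>
            signChanges (rotList (replZeros x p.1) p.2))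
          (Finset.mem_univ (ε, (0 : Fin (m+1))))
    have hS : sPlus x = Finset.univ.sup L := rfl
    obtain ⟨ε₀, -, hε₀⟩ := Finset.exists_mem_eq_sup Finset.univ Finset.univ_nonempty L
    have hLle : ∀ ε, L ε ≤ sPlus x := fun ε => by
      rw [hS]; exact Finset.le_sup (Finset.mem_univ ε)
    rw [hPC]
    by_cases hev : Even (sPlus x)
    · rw [if_pos hev]
      apply le_antisymm
      · apply Finset.sup_le
        intro ε _
        have h1 := hCL2 ε
        have h2 := hLle ε
        have h3 := hCeven ε
        rw [Nat.even_iff] at h3 hev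
        omega
      · calc sPlus x = L ε₀ := by rw [hS, hε₀]
          _ ≤ C ε₀ := hCL1 ε₀
          _ ≤ _ := Finset.le_sup (Finset.mem_univ ε₀)
    · rw [if_neg hev]
      apply le_antisymm
      · apply Finset.sup_le
        intro ε _
        have h1 := hCL2 ε
        have h2 := hLle ε
        omega
      · have h1 : sPlus x ≤ C ε₀ := by
          rw [hS, hε₀]; exact hCL1 ε₀
        have h3 := hCeven ε₀
        rw [Nat.even_iff] at h3
        rw [Nat.not_even_iff] at hev
        exact le_trans (by omega : sPlus x + 1 ≤ C ε₀) (Finset.le_sup (Finset.mem_univ ε₀))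
end

section
/- Let a < b be real numbers and let x : (a,b) → ℝ^n be a function with x(t) ≠ 0 for all t ∈ (a,b), satisfying s_c^+(x(t)) ≤ s_c^-(x(t₀)) for all a < t₀ < t < b. If x(t₀) ∉ V_c for some t₀ ∈ (a,b), then s_c^+(x(t)) < s_c^+(x(t₀)) for all t ∈ (t₀, b); consequently, the set {t ∈ (a,b) : x(t) ∉ V_c} contains at most ⌊n/2⌋ points. -/
lemma signChanges_cons_le (a : ℝ) (l : List ℝ) : signChanges l ≤ signChanges (a :: l) := by
  cases l with
  | nil => simp [signChanges]
  | cons b l => simp only [signChanges]; omega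

lemma signChanges_head_congr {a b : ℝ} (h : 0 < a * b) (l : List ℝ) :
    signChanges (a :: l) = signChanges (b :: l) := by
  cases l with
  | nil => rfl
  | cons c l =>
    simp only [signChanges]
    congr 1
    have : a * c < 0 ↔ b * c < 0 := by
      constructor <;> intro h' <;> by_contra h'' <;> push_neg at h'' <;>
        nlinarith [mul_neg_of_pos_of_neg h h', mul_nonneg (sq_nonneg a) h'',
          mul_nonneg (sq_nonneg b) h'']
    simp [this]

lemma signChanges_head_le (a b : ℝ) (l : List ℝ) :
    signChanges (a :: l) ≤ 1 + signChanges (b :: l) := by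
  cases l with
  | nil => simp [signChanges]
  | cons c l => simp only [signChanges]; split <;> split <;> omega

lemma signChanges_sublist_aux {l₁ l₂ : List ℝ} (h : l₁.Sublist l₂) (hz : ∀ x ∈ l₂, x ≠ 0) :
    signChanges l₁ ≤ signChanges l₂ ∧
      ∀ a : ℝ, a ≠ 0 → signChanges (a :: l₁) ≤ signChanges (a :: l₂) := by
  induction h with
  | slnil => exact ⟨le_rfl, fun a _ => le_rfl⟩
  | @cons l₁ l₂ b h ih =>
    have hb : b ≠ 0 := hz b List.mem_cons_self
    obtain ⟨ih1, ih2⟩ := ih (fun x hx => hz x (List.mem_cons_of_mem _ hx))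
    refine ⟨ih1.trans (signChanges_cons_le b _), fun a ha => ?_⟩
    rcases lt_trichotomy (a * b) 0 with hab | hab | hab
    · calc signChanges (a :: l₁) ≤ signChanges (a :: l₂) := ih2 a ha
        _ ≤ 1 + signChanges (b :: l₂) := signChanges_head_le a b l₂
        _ = signChanges (a :: b :: l₂) := by simp [signChanges, hab]
    · exact absurd hab (mul_ne_zero ha hb)
    · calc signChanges (a :: l₁) ≤ signChanges (a :: l₂) := ih2 a ha
        _ = signChanges (b :: l₂) := signChanges_head_congr hab l₂
        _ ≤ signChanges (a :: b :: l₂) := by simp only [signChanges]; omega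
  | @cons_cons l₁ l₂ b h ih =>
    have hb : b ≠ 0 := hz b List.mem_cons_self
    obtain ⟨ih1, ih2⟩ := ih (fun x hx => hz x (List.mem_cons_of_mem _ hx))
    refine ⟨ih2 b hb, fun a ha => ?_⟩
    simp only [signChanges]
    exact Nat.add_le_add_left (ih2 b hb) _

lemma signChanges_sublist {l₁ l₂ : List ℝ} (h : l₁.Sublist l₂) (hz : ∀ x ∈ l₂, x ≠ 0) :
    signChanges l₁ ≤ signChanges l₂ := (signChanges_sublist_aux h hz).1

lemma signChanges_parity : ∀ (l : List ℝ) (a b : ℝ), (∀ x ∈ l, x ≠ 0) → a ≠ 0 → b ≠ 0 →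
    signChanges (a :: (l ++ [b])) % 2 = if a * b < 0 then 1 else 0 := by
  intro l
  induction l with
  | nil =>
    intro a b _ ha hb
    show ((if a * b < 0 then 1 else 0) + 0) % 2 = _
    split <;> rfl
  | cons c l ih =>
    intro a b hz ha hb
    have hc : c ≠ 0 := hz c List.mem_cons_self
    have h2 := ih c b (fun x hx => hz x (List.mem_cons_of_mem _ hx)) hc hb
    show ((if a * c < 0 then 1 else 0) + signChanges (c :: (l ++ [b]))) % 2 = _
    have pos_of : ∀ u v : ℝ, u ≠ 0 → v ≠ 0 → ¬ u * v < 0 → 0 < u * v := fun u v hu hv hw =>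
      lt_of_le_of_ne (not_lt.mp hw) (Ne.symm (mul_ne_zero hu hv))
    by_cases hac : a * c < 0 <;> by_cases hcb : c * b < 0 <;> by_cases hab : a * b < 0 <;>
      simp only [hac, hcb, hab, if_true, if_false] at h2 ⊢
    · exfalso
      nlinarith [mul_pos_of_neg_of_neg hac hcb, mul_nonneg (sq_nonneg c) (neg_nonneg.mpr hab.le)]
    · omega
    · omega
    · exfalso
      nlinarith [mul_neg_of_neg_of_pos hac (pos_of c b hc hb hcb),
        mul_nonneg (sq_nonneg c) (pos_of a b ha hb hab).le]
    · omega
    · exfalso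
      nlinarith [mul_neg_of_pos_of_neg (pos_of a c ha hc hac) hcb,
        mul_nonneg (sq_nonneg c) (pos_of a b ha hb hab).le]
    · exfalso
      nlinarith [mul_pos (pos_of a c ha hc hac) (pos_of c b hc hb hcb),
        mul_nonneg (sq_nonneg c) (neg_nonneg.mpr hab.le)]
    · omega

lemma replZeros_ne_zero {n : ℕ} (x : Fin n → ℝ) (ε : Fin n → Bool) (i : Fin n) :
    replZeros x ε i ≠ 0 := by
  unfold replZeros
  split
  · split <;> norm_num
  · assumption

lemma mem_rotList {n : ℕ} {y : Fin n → ℝ} {i : Fin n} {v : ℝ} (hv : v ∈ rotList y i) :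
    ∃ j, y j = v := by
  unfold rotList at hv
  rcases List.mem_append.mp hv with hv | hv
  · rcases List.mem_ofFn.mp (List.mem_rotate.mp hv) with ⟨j, hj⟩; exact ⟨j, hj⟩
  · exact ⟨i, (List.mem_singleton.mp hv).symm⟩

lemma rotList_forall₂ {n : ℕ} {R : ℝ → ℝ → Prop} {x y : Fin n → ℝ}
    (hxy : ∀ j, R (x j) (y j)) (i : Fin n) : List.Forall₂ R (rotList x i) (rotList y i) := by
  unfold rotList
  apply List.rel_append
  · rw [List.forall₂_iff_get]
    refine ⟨by simp, fun k h₁ h₂ => ?_⟩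
    rw [List.get_rotate, List.get_rotate, List.get_ofFn, List.get_ofFn]
    simp only [List.length_ofFn, Fin.cast_mk]
    exact hxy _
  · exact List.Forall₂.cons (hxy i) List.Forall₂.nil

lemma filter_sublist_of_forall₂ : ∀ {l₁ l₂ : List ℝ},
    List.Forall₂ (fun a b => a ≠ 0 → b = a) l₁ l₂ →
    (l₁.filter (fun a => decide (a ≠ 0))).Sublist l₂ := by
  intro l₁ l₂ h
  induction h with
  | nil => simp
  | @cons a b l₁ l₂ hab _ ih =>
    by_cases ha : a = 0
    · rw [List.filter_cons_of_neg (by simp [ha])]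
      exact ih.cons b
    · rw [List.filter_cons_of_pos (by simp [ha]), hab ha]
      exact ih.cons₂ a

lemma sMinusList_rot_le {n : ℕ} (x : Fin n → ℝ) (ε : Fin n → Bool) (i : Fin n) :
    sMinusList (rotList x i) ≤ signChanges (rotList (replZeros x ε) i) := by
  refine signChanges_sublist ?_ ?_
  · refine filter_sublist_of_forall₂ (rotList_forall₂ ?_ i)
    intro j hj
    unfold replZeros
    rw [if_neg hj]
  · intro v hv
    rcases mem_rotList hv with ⟨j, hj⟩
    rw [← hj]
    exact replZeros_ne_zero _ _ _

lemma sMinusC_le_sPlusC {n : ℕ} (x : Fin n → ℝ) : sMinusC x ≤ sPlusC x := by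
  refine Finset.sup_le fun i _ => ?_
  exact le_trans (sMinusList_rot_le x (fun _ => true) i)
    (Finset.le_sup (f := fun p : (Fin n → Bool) × Fin n =>
      signChanges (rotList (replZeros x p.1) p.2)) (Finset.mem_univ ((fun _ => true), i)))

lemma signChanges_cons_le_length : ∀ (l : List ℝ) (a : ℝ), signChanges (a :: l) ≤ l.length := by
  intro l
  induction l with
  | nil => intro a; simp [signChanges]
  | cons b l ih =>
    intro a
    show (if a * b < 0 then 1 else 0) + signChanges (b :: l) ≤ l.length + 1
    have := ih b
    split <;> omega

lemma sPlusC_le {n : ℕ} (x : Fin n → ℝ) : sPlusC x ≤ n := by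
  refine Finset.sup_le fun p _ => ?_
  show signChanges (rotList (replZeros x p.1) p.2) ≤ n
  unfold rotList
  cases hL : (List.ofFn (replZeros x p.1)).rotate p.2.val ++ [replZeros x p.1 p.2] with
  | nil => simp [signChanges]
  | cons c m =>
    have hlen : m.length = n := by
      have := congrArg List.length hL
      simp at this
      omega
    exact hlen ▸ signChanges_cons_le_length m c

lemma signChanges_rotList_even {n : ℕ} (hn : 0 < n) (y : Fin n → ℝ) (hy : ∀ j, y j ≠ 0)
    (i : Fin n) : Even (signChanges (rotList y i)) := by
  set L := (List.ofFn y).rotate i.val with hL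
  have hlen : L.length = n := by simp [hL]
  have hne : L ≠ [] := by
    intro hc
    rw [hc] at hlen
    simp at hlen
    omega
  have hhead : L.head hne = y i := by
    rw [List.head_eq_getElem_zero]
    simp only [hL, List.getElem_rotate, List.length_ofFn, List.getElem_ofFn]
    simp [Nat.mod_eq_of_lt i.isLt]
  have hrot : rotList y i = y i :: (L.tail ++ [y i]) := by
    conv_lhs => rw [rotList, ← hL, ← List.cons_head_tail hne]
    rw [hhead, List.cons_append]
  rw [hrot]
  have htail : ∀ v ∈ L.tail, v ≠ 0 := by
    intro v hv
    have hv' : v ∈ L := List.mem_of_mem_tail hv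
    rcases List.mem_ofFn.mp (List.mem_rotate.mp (hL ▸ hv')) with ⟨j, hj⟩
    rw [← hj]; exact hy j
  have hpar := signChanges_parity L.tail (y i) (y i) htail (hy i) (hy i)
  rw [if_neg (not_lt.mpr (mul_self_nonneg _))] at hpar
  exact Nat.even_iff.mpr hpar

lemma sPlusC_even {n : ℕ} (hn : 0 < n) (x : Fin n → ℝ) : Even (sPlusC x) := by
  obtain ⟨p, -, hp⟩ := Finset.exists_mem_eq_sup (Finset.univ : Finset ((Fin n → Bool) × Fin n))
    ⟨((fun _ => true), ⟨0, hn⟩), Finset.mem_univ _⟩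
    (fun p => signChanges (rotList (replZeros x p.1) p.2))
  rw [sPlusC, hp]
  exact signChanges_rotList_even hn _ (replZeros_ne_zero x p.1) p.2

/-- If `x : (a,b) → ℝⁿ` is nonvanishing and satisfies
`s_c⁺(x(t)) ≤ s_c⁻(x(t₀))` whenever `a < t₀ < t < b`, then `s_c⁺(x(·))`
strictly decreases after any point `t₀` with `x(t₀) ∉ V_c` (i.e. with
`s_c⁻(x(t₀)) ≠ s_c⁺(x(t₀))`); consequently, the set of points where
`x(t) ∉ V_c` has at most `⌊n/2⌋` elements. -/
theorem outside_Vc_finitely_often (n : ℕ) (a b : ℝ) (hab : a < b)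
    (x : ℝ → Fin n → ℝ) (hx : ∀ t, t ∈ Set.Ioo a b → x t ≠ 0)
    (h : ∀ t₀ t : ℝ, a < t₀ → t₀ < t → t < b → sPlusC (x t) ≤ sMinusC (x t₀)) :
    (∀ t₀, t₀ ∈ Set.Ioo a b → sMinusC (x t₀) ≠ sPlusC (x t₀) →
      ∀ t, t₀ < t → t < b → sPlusC (x t) < sPlusC (x t₀)) ∧
    ({t | t ∈ Set.Ioo a b ∧ sMinusC (x t) ≠ sPlusC (x t)}.Finite ∧
      {t | t ∈ Set.Ioo a b ∧ sMinusC (x t) ≠ sPlusC (x t)}.ncard ≤ n / 2) := by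
  have hn : 0 < n := by
    by_contra hn
    push_neg at hn
    refine hx ((a + b) / 2) ⟨by linarith, by linarith⟩ (funext fun j => ?_)
    exact absurd j.isLt (by omega)
  have part1 : ∀ t₀, t₀ ∈ Set.Ioo a b → sMinusC (x t₀) ≠ sPlusC (x t₀) →
      ∀ t, t₀ < t → t < b → sPlusC (x t) < sPlusC (x t₀) := by
    intro t₀ ht₀ hne t htt htb
    exact lt_of_le_of_lt (h t₀ t ht₀.1 htt htb) (lt_of_le_of_ne (sMinusC_le_sPlusC _) hne)
  refine ⟨part1, ?_⟩
  set S := {t | t ∈ Set.Ioo a b ∧ sMinusC (x t) ≠ sPlusC (x t)} with hS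
  have key : ∀ t ∈ S, sPlusC (x t) / 2 ∈ Finset.Icc 1 (n / 2) := by
    intro t ht
    obtain ⟨htab, htne⟩ := ht
    obtain ⟨k, hk⟩ := sPlusC_even hn (x t)
    have h1 : 0 < sPlusC (x t) :=
      lt_of_le_of_lt (Nat.zero_le _) (lt_of_le_of_ne (sMinusC_le_sPlusC _) htne)
    have h2 : sPlusC (x t) ≤ n := sPlusC_le (x t)
    simp only [Finset.mem_Icc]
    omega
  have hmono : ∀ t₁ ∈ S, ∀ t₂ ∈ S, t₁ < t₂ → sPlusC (x t₂) < sPlusC (x t₁) :=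
    fun t₁ h₁ t₂ h₂ hlt => part1 t₁ h₁.1 h₁.2 t₂ hlt h₂.1.2
  have hinj : Set.InjOn (fun t => sPlusC (x t) / 2) S := by
    intro t₁ h₁ t₂ h₂ heq
    by_contra hne
    obtain ⟨k1, hk1⟩ := sPlusC_even hn (x t₁)
    obtain ⟨k2, hk2⟩ := sPlusC_even hn (x t₂)
    simp only at heq
    rcases Ne.lt_or_gt hne with hlt | hlt
    · have := hmono t₁ h₁ t₂ h₂ hlt; omega
    · have := hmono t₂ h₂ t₁ h₁ hlt; omega
  have himg : (fun t => sPlusC (x t) / 2) '' S ⊆ ↑(Finset.Icc 1 (n / 2)) := by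
    rintro v ⟨t, ht, rfl⟩
    exact key t ht
  have hfin : S.Finite :=
    Set.Finite.of_finite_image (Set.Finite.subset (Finset.finite_toSet _) himg) hinj
  refine ⟨hfin, ?_⟩
  calc S.ncard = ((fun t => sPlusC (x t) / 2) '' S).ncard :=
        (Set.ncard_image_of_injOn hinj).symm
    _ ≤ (↑(Finset.Icc 1 (n / 2)) : Set ℕ).ncard :=
        Set.ncard_le_ncard himg (Finset.finite_toSet _)
    _ = (Finset.Icc 1 (n / 2)).card := by rw [Set.ncard_coe_finset]
    _ ≤ n / 2 := by rw [Nat.card_Icc]; omega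
end
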